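/- For every g ∈ C_c^∞(ℝ) that vanishes in a neighborhood of 0 and whose support is contained in {v ∈ ℝ : b̃(v) ≠ 0}, the following integration-by-parts identity holds: π_H(g'') = π_{G(H)}(g') − Σ_{i=2}^N π_{G_i(H)}((g ∘ Δ_i^1)'). -/

import Mathlib

open MeasureTheory Set

noncomputable section

/-- The house-of-cards jump map `Δ_i`: coordinate `i` is reset to `0`, coordinate `j ≠ i`
is moved to `x^j + a_i^j(x^j)`. -/
def jmap (N : ℕ) (aij : Fin N → Fin N → ℝ → ℝ) (i : Fin N) (x : Fin N → ℝ) : Fin N → ℝ :=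
  fun j => if j = i then 0 else x j + aij i j (x j)

/-- The coordinatewise flow `γ_t(x) = (γ̃_t(x^1),…,γ̃_t(x^N))`. -/
def flowN (N : ℕ) (γt : ℝ → ℝ → ℝ) (t : ℝ) (x : Fin N → ℝ) : Fin N → ℝ :=
  fun j => γt t (x j)

/-- The survival factor `e(x,t) = exp(-∫_0^t f̄(γ_s(x)) ds)`. -/
def surv (N : ℕ) (γt : ℝ → ℝ → ℝ) (f : Fin N → ℝ → ℝ) (x : Fin N → ℝ) (t : ℝ) : ℝ :=
  Real.exp (-∫ s in (0:ℝ)..t, ∑ i, f i (γt s (x i)))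

/-- `π_H(h) = Σ_i ∫ f_i(x^i) ∫_0^∞ e(Δ_i(x),t) H(γ_t(Δ_i(x))) h(γ̃_t(Δ_i^1(x^1))) dt m(dx)`,
where `i1` denotes the first coordinate. -/
def piH (N : ℕ) (γt : ℝ → ℝ → ℝ) (f : Fin N → ℝ → ℝ) (aij : Fin N → Fin N → ℝ → ℝ)
    (i1 : Fin N) (m : Measure (Fin N → ℝ)) (H : (Fin N → ℝ) → ℝ) (h : ℝ → ℝ) : ℝ :=
  ∑ i, ∫ x, (f i (x i) *
    ∫ t in Ioi (0:ℝ),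
      surv N γt f (jmap N aij i x) t * H (flowN N γt t (jmap N aij i x)) *
        h (γt t (jmap N aij i x i1))) ∂m





namespace HOC

/-- Packaged hypotheses on the 1-D drift and its flow. -/
structure FlowSetup (btilde : ℝ → ℝ) (γt : ℝ → ℝ → ℝ) (B : ℝ) : Prop where
  hBpos : 0 < B
  hbdiff : Differentiable ℝ btilde
  hbB : ∀ v, |btilde v| ≤ B
  hbB' : ∀ v, |deriv btilde v| ≤ B
  hγ0 : ∀ v, γt 0 v = v
  hγ : ∀ v t, 0 ≤ t → HasDerivAt (fun s => γt s v) (btilde (γt t v)) t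

variable {btilde : ℝ → ℝ} {γt : ℝ → ℝ → ℝ} {B : ℝ}

namespace FlowSetup

theorem bcont (S : FlowSetup btilde γt B) : Continuous btilde := S.hbdiff.continuous

theorem blip (S : FlowSetup btilde γt B) : LipschitzWith ⟨B, S.hBpos.le⟩ btilde := by
  refine lipschitzWith_of_nnnorm_deriv_le S.hbdiff fun v => ?_
  refine NNReal.coe_le_coe.1 ?_
  exact (by simpa [Real.norm_eq_abs] using S.hbB' v : (‖deriv btilde v‖₊ : ℝ) ≤ B)

theorem contOn (S : FlowSetup btilde γt B) (v : ℝ) :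
    ContinuousOn (fun s => γt s v) (Ici 0) :=
  fun t ht => (S.hγ v t ht).continuousAt.continuousWithinAt

theorem integrable_b (S : FlowSetup btilde γt B) (v : ℝ) {t1 t2 : ℝ}
    (h1 : 0 ≤ t1) (h2 : 0 ≤ t2) :
    IntervalIntegrable (fun s => btilde (γt s v)) volume t1 t2 := by
  refine ContinuousOn.intervalIntegrable ?_
  refine (S.bcont.comp_continuousOn (S.contOn v)).mono fun t ht => ?_
  exact le_trans (le_min h1 h2) ht.1

theorem ftc (S : FlowSetup btilde γt B) (v : ℝ) {t1 t2 : ℝ} (h1 : 0 ≤ t1) (h2 : 0 ≤ t2) :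
    ∫ s in t1..t2, btilde (γt s v) = γt t2 v - γt t1 v := by
  refine intervalIntegral.integral_eq_sub_of_hasDerivAt (f := fun t => γt t v)
    (fun t ht => ?_) (S.integrable_b v h1 h2)
  exact S.hγ v t (le_trans (le_min h1 h2) ht.1)

theorem grow (S : FlowSetup btilde γt B) (u v : ℝ) {t : ℝ} (ht : 0 ≤ t) :
    dist (γt t u) (γt t v) ≤ dist u v * Real.exp (B * t) := by
  have h := dist_le_of_trajectories_ODE (v := fun _ x => btilde x) (K := ⟨B, S.hBpos.le⟩)
    (f := fun s => γt s u) (g := fun s => γt s v) (a := 0) (b := t) (δ := dist u v)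
    (fun _ => S.blip)
    ((S.contOn u).mono (Icc_subset_Ici_self))
    (fun s hs => (S.hγ u s hs.1).hasDerivWithinAt)
    ((S.contOn v).mono (Icc_subset_Ici_self))
    (fun s hs => (S.hγ v s hs.1).hasDerivWithinAt)
    (by simp [S.hγ0]) t ⟨ht, le_rfl⟩
  simp at h; exact h

end FlowSetup

/-- The flow, extended (constantly) to negative times in a measurable way. -/
def gp (γt : ℝ → ℝ → ℝ) : ℝ × ℝ → ℝ := fun p => γt (max p.1 0) p.2

theorem gp_eq (γt : ℝ → ℝ → ℝ) {t : ℝ} (ht : 0 ≤ t) (v : ℝ) : gp γt (t, v) = γt t v := by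
  simp [gp, max_eq_left ht]

namespace FlowSetup

theorem gp_cont (S : FlowSetup btilde γt B) : Continuous (gp γt) := by
  rw [continuous_iff_continuousAt]
  rintro ⟨t0, v0⟩
  rw [Metric.continuousAt_iff]
  intro ε hε
  set E := Real.exp (B * (max t0 0 + 1)) with hE
  have hEpos : 0 < E := Real.exp_pos _
  have hEB : 0 < E + B + 1 := by have := S.hBpos; linarith
  refine ⟨min 1 (ε / (E + B + 1)), lt_min one_pos (div_pos hε hEB), ?_⟩
  rintro ⟨t, v⟩ hdist
  have hdt : dist t t0 < min 1 (ε / (E + B + 1)) :=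
    lt_of_le_of_lt (le_max_left _ _) (by simpa [Prod.dist_eq] using hdist)
  have hdv : dist v v0 < min 1 (ε / (E + B + 1)) :=
    lt_of_le_of_lt (le_max_right _ _) (by simpa [Prod.dist_eq] using hdist)
  set s := max t 0 with hs
  set s0 := max t0 0 with hs0
  have hss0 : |s - s0| ≤ |t - t0| := abs_max_sub_max_le_abs t t0 0
  have hsnn : 0 ≤ s := le_max_right _ _
  have hs0nn : 0 ≤ s0 := le_max_right _ _
  have hdt1 : |t - t0| < 1 := lt_of_lt_of_le (by simpa [Real.dist_eq] using hdt) (min_le_left _ _)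
  have hdtε : |t - t0| < ε / (E + B + 1) :=
    lt_of_lt_of_le (by simpa [Real.dist_eq] using hdt) (min_le_right _ _)
  have hdvε : |v - v0| < ε / (E + B + 1) :=
    lt_of_lt_of_le (by simpa [Real.dist_eq] using hdv) (min_le_right _ _)
  have hs_le : s ≤ s0 + 1 := by
    have h2 := (abs_le.1 (hss0.trans hdt1.le)).2
    linarith
  have d1 : dist (γt s v) (γt s v0) ≤ dist v v0 * E := by
    refine (S.grow v v0 hsnn).trans ?_
    refine mul_le_mul_of_nonneg_left ?_ dist_nonneg
    exact Real.exp_le_exp.2 (mul_le_mul_of_nonneg_left (by linarith) S.hBpos.le)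
  have d2 : dist (γt s v0) (γt s0 v0) ≤ B * |s - s0| := by
    have hf := S.ftc v0 (t1 := s0) (t2 := s) hs0nn hsnn
    have hn : ‖∫ x in s0..s, btilde (γt x v0)‖ ≤ B * |s - s0| :=
      intervalIntegral.norm_integral_le_of_norm_le_const
        (fun x _ => by simpa [Real.norm_eq_abs] using S.hbB (γt x v0))
    rw [hf] at hn
    simpa [Real.dist_eq, Real.norm_eq_abs, abs_sub_comm] using hn
  have key : dist (gp γt (t, v)) (gp γt (t0, v0)) < ε := by
    have tri := dist_triangle (γt s v) (γt s v0) (γt s0 v0)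
    have hlt : dist v v0 * E + B * |s - s0| < ε := by
      have e1 : dist v v0 * E ≤ (ε / (E + B + 1)) * E := by
        refine mul_le_mul_of_nonneg_right ?_ hEpos.le
        simpa [Real.dist_eq] using hdvε.le
      have e2 : B * |s - s0| ≤ B * (ε / (E + B + 1)) :=
        mul_le_mul_of_nonneg_left (hss0.trans hdtε.le) S.hBpos.le
      have e3 : (ε / (E + B + 1)) * E + B * (ε / (E + B + 1)) < ε := by
        have h4 : 0 < ε / (E + B + 1) := div_pos hε hEB
        have h5 : (ε / (E + B + 1)) * (E + B + 1) = ε := div_mul_cancel₀ _ hEB.ne'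
        nlinarith [h4, hEpos, S.hBpos]
      linarith
    calc dist (gp γt (t, v)) (gp γt (t0, v0)) = dist (γt s v) (γt s0 v0) := rfl
      _ ≤ dist (γt s v) (γt s v0) + dist (γt s v0) (γt s0 v0) := tri
      _ ≤ dist v v0 * E + B * |s - s0| := add_le_add d1 d2
      _ < ε := hlt
  exact key

end FlowSetup

end HOC
namespace HOC
variable {btilde : ℝ → ℝ} {γt : ℝ → ℝ → ℝ} {B : ℝ}
namespace FlowSetup

theorem zero_backward (S : FlowSetup btilde γt B) {w t0 : ℝ} (ht0 : 0 ≤ t0)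
    (h : btilde (γt t0 w) = 0) : w = γt t0 w := by
  have h' := ODE_solution_unique_of_mem_Icc_left (v := fun _ x => btilde x)
    (K := ⟨B, S.hBpos.le⟩) (s := fun _ => univ) (f := fun s => γt s w)
    (g := fun _ => γt t0 w) (a := 0) (b := t0)
    (fun _ _ => (S.blip).lipschitzOnWith)
    ((S.contOn w).mono Icc_subset_Ici_self)
    (fun s hs => (S.hγ w s hs.1.le).hasDerivWithinAt)
    (fun _ _ => trivial)
    continuousOn_const
    (fun s hs => by simpa [h] using (hasDerivAt_const s (γt t0 w)).hasDerivWithinAt)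
    (fun _ _ => trivial) rfl
  have := h' (left_mem_Icc.2 ht0)
  simpa [S.hγ0] using this

theorem const_of_zero (S : FlowSetup btilde γt B) {w : ℝ} (h : btilde w = 0)
    {t : ℝ} (ht : 0 ≤ t) : γt t w = w := by
  have h' := ODE_solution_unique (v := fun _ x => btilde x) (K := ⟨B, S.hBpos.le⟩)
    (f := fun s => γt s w) (g := fun _ => w) (a := 0) (b := t)
    (fun _ => S.blip)
    ((S.contOn w).mono Icc_subset_Ici_self)
    (fun s hs => (S.hγ w s hs.1).hasDerivWithinAt)
    continuousOn_const
    (fun s hs => by simpa [h] using (hasDerivAt_const s w).hasDerivWithinAt)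
    (by simp [S.hγ0])
  exact h' (right_mem_Icc.2 ht)

theorem sign_pos (S : FlowSetup btilde γt B) {w : ℝ} (hw : 0 < btilde w)
    {t : ℝ} (ht : 0 ≤ t) : 0 < btilde (γt t w) := by
  by_contra hle
  push_neg at hle
  have hcont : ContinuousOn (fun s => btilde (γt s w)) (Icc 0 t) :=
    (S.bcont.comp_continuousOn ((S.contOn w).mono Icc_subset_Ici_self))
  have hIVT := intermediate_value_Icc' ht hcont
  have h0 : (0:ℝ) ∈ Icc (btilde (γt t w)) (btilde (γt 0 w)) := by
    constructor
    · exact hle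
    · rw [S.hγ0]; exact hw.le
  obtain ⟨t', ht', hbt'⟩ := hIVT h0
  simp only [] at hbt'
  have hwe := S.zero_backward ht'.1 hbt'
  rw [← hwe] at hbt'
  exact hw.ne' hbt'

theorem monoOn (S : FlowSetup btilde γt B) {w : ℝ} (hw : 0 < btilde w) :
    MonotoneOn (fun t => γt t w) (Ici 0) := by
  refine monotoneOn_of_deriv_nonneg (convex_Ici 0) (S.contOn w) ?_ ?_
  · intro t ht
    rw [interior_Ici] at ht
    exact ((S.hγ w t ht.le).differentiableAt).differentiableWithinAt
  · intro t ht
    rw [interior_Ici] at ht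
    rw [(S.hγ w t ht.le).deriv]
    exact (S.sign_pos hw ht.le).le

theorem reflect (S : FlowSetup btilde γt B) :
    FlowSetup (fun v => -btilde (-v)) (fun t v => -γt t (-v)) B where
  hBpos := S.hBpos
  hbdiff := (S.hbdiff.comp (differentiable_neg)).neg
  hbB := fun v => by simpa using S.hbB (-v)
  hbB' := fun v => by
    have h : HasDerivAt (fun v : ℝ => -btilde (-v)) (deriv btilde (-v)) v := by
      have h0 := (((S.hbdiff (-v)).hasDerivAt.comp v (hasDerivAt_neg v)).neg)
      rw [show deriv btilde (-v) = -(deriv btilde (-v) * -1) by ring]; exact h0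
    rw [h.deriv]
    exact S.hbB' _
  hγ0 := fun v => by simp [S.hγ0]
  hγ := fun v t ht => by
    have h0 := (S.hγ (-v) t ht).neg
    simp only [neg_neg]; exact h0

/-- Occupation-time bound: a trajectory spends at most `D/c0` time units in a closed
set on which `|btilde| ≥ c0`, where `D` bounds differences of elements of the set. -/
theorem occupation_pos (S : FlowSetup btilde γt B) {K' : Set ℝ} (hK : IsClosed K')
    {c0 D : ℝ} (hc0 : 0 < c0) (hbc : ∀ v ∈ K', c0 ≤ |btilde v|)
    (hD : ∀ u ∈ K', ∀ v ∈ K', u - v ≤ D) {w : ℝ} (hw : 0 < btilde w) :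
    volume (Ioi 0 ∩ {t : ℝ | γt (max t 0) w ∈ K'}) ≤ ENNReal.ofReal (D / c0) := by
  have hgpc : Continuous (fun t : ℝ => γt (max t 0) w) :=
    S.gp_cont.comp (continuous_id.prodMk continuous_const)
  have hCclosed : IsClosed {t : ℝ | γt (max t 0) w ∈ K'} := hK.preimage hgpc
  set A := Ioi 0 ∩ {t : ℝ | γt (max t 0) w ∈ K'} with hA
  have hstep : ∀ T : ℕ, volume (A ∩ Ioc 0 (T : ℝ)) ≤ ENNReal.ofReal (D / c0) := by
    intro T
    set St := A ∩ Ioc 0 (T : ℝ) with hSt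
    rcases eq_empty_or_nonempty St with hemp | hne
    · simp [hemp]
    have hStMeas : MeasurableSet St :=
      ((measurableSet_Ioi.inter hCclosed.measurableSet).inter measurableSet_Ioc)
    have hStsub : St ⊆ Ioc 0 (T : ℝ) := inter_subset_right
    have hbdd : BddBelow St ∧ BddAbove St :=
      ⟨⟨0, fun x hx => (hStsub hx).1.le⟩, ⟨(T : ℝ), fun x hx => (hStsub hx).2⟩⟩
    set t1 := sInf St with ht1def
    set τ := sSup St with hτdef
    have ht1mem : t1 ∈ closure St := csInf_mem_closure hne hbdd.1
    have hτmem : τ ∈ closure St := csSup_mem_closure hne hbdd.2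
    have hclsub : closure St ⊆ Icc 0 (T : ℝ) ∩ {t : ℝ | γt (max t 0) w ∈ K'} := by
      refine closure_minimal (fun x hx => ⟨⟨(hStsub hx).1.le, (hStsub hx).2⟩, hx.1.2⟩) ?_
      exact (isClosed_Icc.inter hCclosed)
    have ht1' := hclsub ht1mem
    have hτ' := hclsub hτmem
    have ht1nn : 0 ≤ t1 := ht1'.1.1
    have hτnn : 0 ≤ τ := hτ'.1.1
    have hγt1 : γt t1 w ∈ K' := by
      have := ht1'.2; simpa only [mem_setOf_eq, max_eq_left ht1nn] using this
    have hγτ : γt τ w ∈ K' := by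
      have := hτ'.2; simpa only [mem_setOf_eq, max_eq_left hτnn] using this
    have ht1τ : t1 ≤ τ := by
      obtain ⟨x, hx⟩ := hne
      exact le_trans (csInf_le hbdd.1 hx) (le_csSup hbdd.2 hx)
    have hStIcc : St ⊆ Icc t1 τ := fun x hx => ⟨csInf_le hbdd.1 hx, le_csSup hbdd.2 hx⟩
    have hIccpos : ∀ s ∈ Icc t1 τ, 0 ≤ btilde (γt s w) :=
      fun s hs => (S.sign_pos hw (le_trans ht1nn hs.1)).le
    have hint : IntegrableOn (fun s => btilde (γt s w)) (Icc t1 τ) volume := by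
      refine ContinuousOn.integrableOn_Icc ?_
      exact S.bcont.comp_continuousOn ((S.contOn w).mono
        (fun x hx => le_trans ht1nn hx.1))
    have hμSt_fin : volume St ≠ ⊤ :=
      (lt_of_le_of_lt (measure_mono hStsub) measure_Ioc_lt_top).ne
    have step1 : c0 * (volume St).toReal ≤ ∫ s in St, btilde (γt s w) := by
      rw [show c0 * (volume St).toReal = volume.real St • c0 from by
        rw [smul_eq_mul, mul_comm]; rfl]
      refine setIntegral_ge_of_const_le hStMeas hμSt_fin (fun x hx => ?_)
        (hint.mono_set hStIcc)
      have hxK : γt x w ∈ K' := by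
        have := hx.1.2
        simpa only [mem_setOf_eq, max_eq_left (hStsub hx).1.le] using this
      have := hbc _ hxK
      rwa [abs_of_pos (S.sign_pos hw (hStsub hx).1.le)] at this
    have step2 : ∫ s in St, btilde (γt s w) ≤ ∫ s in Icc t1 τ, btilde (γt s w) := by
      have h0f : (0 : ℝ → ℝ) ≤ᵐ[volume.restrict (Icc t1 τ)] fun s => btilde (γt s w) :=
        (ae_restrict_iff' measurableSet_Icc).2
          (Filter.Eventually.of_forall fun x hx => hIccpos x hx)
      exact setIntegral_mono_set hint h0f (HasSubset.Subset.eventuallyLE hStIcc)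
    have step3 : ∫ s in Icc t1 τ, btilde (γt s w) = γt τ w - γt t1 w := by
      rw [integral_Icc_eq_integral_Ioc, ← intervalIntegral.integral_of_le ht1τ]
      exact S.ftc w ht1nn hτnn
    have step4 : γt τ w - γt t1 w ≤ D := hD _ hγτ _ hγt1
    have hfinal : (volume St).toReal ≤ D / c0 := by
      rw [le_div_iff₀ hc0, mul_comm]
      calc c0 * (volume St).toReal ≤ ∫ s in St, btilde (γt s w) := step1
        _ ≤ ∫ s in Icc t1 τ, btilde (γt s w) := step2
        _ = γt τ w - γt t1 w := step3
        _ ≤ D := step4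
    calc volume St = ENNReal.ofReal ((volume St).toReal) := (ENNReal.ofReal_toReal hμSt_fin).symm
      _ ≤ ENNReal.ofReal (D / c0) := ENNReal.ofReal_le_ofReal hfinal
  have hunion : A = ⋃ T : ℕ, (A ∩ Ioc 0 (T : ℝ)) := by
    ext t
    simp only [mem_iUnion, mem_inter_iff, mem_Ioc]
    constructor
    · intro ht
      obtain ⟨n, hn⟩ := exists_nat_ge t
      exact ⟨n, ht, ht.1, hn⟩
    · rintro ⟨n, ht, _⟩; exact ht
  rw [hunion]
  rw [Directed.measure_iUnion]
  · exact iSup_le hstep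
  · intro m n
    rcases le_total m n with h | h
    · exact ⟨n, inter_subset_inter_right _ (Ioc_subset_Ioc_right (by exact_mod_cast h)),
        le_refl _⟩
    · exact ⟨m, le_refl _,
        inter_subset_inter_right _ (Ioc_subset_Ioc_right (by exact_mod_cast h))⟩

theorem occupation (S : FlowSetup btilde γt B) {K' : Set ℝ} (hK : IsClosed K')
    {c0 D : ℝ} (hc0 : 0 < c0) (hbc : ∀ v ∈ K', c0 ≤ |btilde v|)
    (hD : ∀ u ∈ K', ∀ v ∈ K', u - v ≤ D) (w : ℝ) :
    volume (Ioi 0 ∩ {t : ℝ | γt (max t 0) w ∈ K'}) ≤ ENNReal.ofReal (D / c0) := by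
  rcases lt_trichotomy (btilde w) 0 with hneg | hzero | hpos
  · -- use the reflected flow
    have S' := S.reflect
    have h' := S'.occupation_pos (K' := (fun v : ℝ => -v) ⁻¹' K') (hK.preimage continuous_neg)
      (c0 := c0) (D := D) hc0
      (fun v hv => by simpa using hbc _ hv)
      (fun u hu v hv => by
        have := hD _ hv _ hu
        simp only [mem_preimage] at hu hv
        linarith [hD (-v) hv (-u) hu])
      (w := -w) (by simpa using hneg)
    have hsets : Ioi 0 ∩ {t : ℝ | γt (max t 0) w ∈ K'}
        = Ioi 0 ∩ {t : ℝ | (fun t v => -γt t (-v)) (max t 0) (-w) ∈ (fun v : ℝ => -v) ⁻¹' K'} := by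
      ext t; simp
    rw [hsets]
    exact h'
  · have hconst : ∀ t : ℝ, 0 < t → γt (max t 0) w = w := fun t ht =>
      S.const_of_zero hzero (le_max_right _ _)
    have : Ioi 0 ∩ {t : ℝ | γt (max t 0) w ∈ K'} = ∅ ∨
        Ioi 0 ∩ {t : ℝ | γt (max t 0) w ∈ K'} ⊆ ∅ := by
      right
      intro t ht
      have hmem : w ∈ K' := by
        have := ht.2
        simpa only [mem_setOf_eq, hconst t ht.1] using this
      have := hbc _ hmem
      rw [hzero] at this
      simp at this
      linarith
    rcases this with h | h
    · simp [h]
    · have : Ioi 0 ∩ {t : ℝ | γt (max t 0) w ∈ K'} = ∅ := subset_empty_iff.1 h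
      simp [this]
  · exact S.occupation_pos hK hc0 hbc hD hpos

end FlowSetup
end HOC
namespace HOC
variable {btilde : ℝ → ℝ} {γt : ℝ → ℝ → ℝ} {B : ℝ} {N : ℕ}

/-- measurable-in-time version of the coordinatewise flow -/
def flowp (N : ℕ) (γt : ℝ → ℝ → ℝ) (t : ℝ) (y : Fin N → ℝ) : Fin N → ℝ :=
  fun j => gp γt (t, y j)

/-- total jump rate -/
def fbar (N : ℕ) (f : Fin N → ℝ → ℝ) (z : Fin N → ℝ) : ℝ := ∑ j, f j (z j)

/-- cumulative rate along the flow -/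
def Fbp (N : ℕ) (γt : ℝ → ℝ → ℝ) (f : Fin N → ℝ → ℝ) (y : Fin N → ℝ) (t : ℝ) : ℝ :=
  ∫ s in (0:ℝ)..t, fbar N f (flowp N γt s y)

/-- measurable version of the survival factor -/
def spv (N : ℕ) (γt : ℝ → ℝ → ℝ) (f : Fin N → ℝ → ℝ) (y : Fin N → ℝ) (t : ℝ) : ℝ :=
  Real.exp (-(Fbp N γt f y t))

/-- inner time-integral appearing in `piH` -/
def Inner (N : ℕ) (γt : ℝ → ℝ → ℝ) (f : Fin N → ℝ → ℝ) (i1 : Fin N)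
    (Q : (Fin N → ℝ) → ℝ) (h : ℝ → ℝ) (y : Fin N → ℝ) : ℝ :=
  ∫ t in Ioi (0:ℝ), spv N γt f y t * Q (flowp N γt t y) * h (gp γt (t, y i1))

namespace FlowSetup

theorem flowp_cont (S : FlowSetup btilde γt B) :
    Continuous fun p : ℝ × (Fin N → ℝ) => flowp N γt p.1 p.2 := by
  refine continuous_pi fun j => ?_
  exact S.gp_cont.comp (continuous_fst.prodMk ((continuous_apply j).comp continuous_snd))

theorem flowp_cont_t (S : FlowSetup btilde γt B) (y : Fin N → ℝ) :
    Continuous fun t => flowp N γt t y :=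
  (S.flowp_cont).comp (continuous_id.prodMk continuous_const)

theorem Fbp_hasDeriv (S : FlowSetup btilde γt B) {f : Fin N → ℝ → ℝ}
    (hfc : ∀ j, Continuous (f j)) (y : Fin N → ℝ) (t : ℝ) :
    HasDerivAt (Fbp N γt f y) (fbar N f (flowp N γt t y)) t := by
  have hcont : Continuous fun s => fbar N f (flowp N γt s y) := by
    refine continuous_finset_sum _ fun j _ => ?_
    exact (hfc j).comp ((continuous_apply j).comp (S.flowp_cont_t y))
  exact intervalIntegral.integral_hasDerivAt_right (hcont.intervalIntegrable _ _)
    (hcont.stronglyMeasurable.stronglyMeasurableAtFilter) hcont.continuousAt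

theorem Fbp_cont (S : FlowSetup btilde γt B) {f : Fin N → ℝ → ℝ}
    (hfc : ∀ j, Continuous (f j)) (y : Fin N → ℝ) : Continuous (Fbp N γt f y) :=
  continuous_iff_continuousAt.2 fun t => (S.Fbp_hasDeriv hfc y t).continuousAt

theorem Fbp_mono (S : FlowSetup btilde γt B) {f : Fin N → ℝ → ℝ}
    (hfc : ∀ j, Continuous (f j)) (hfpos : ∀ j v, 0 < f j v) (y : Fin N → ℝ) :
    Monotone (Fbp N γt f y) := by
  have hcont : Continuous fun s => fbar N f (flowp N γt s y) := by
    refine continuous_finset_sum _ fun j _ => ?_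
    exact (hfc j).comp ((continuous_apply j).comp (S.flowp_cont_t y))
  intro s t hst
  have hadd : Fbp N γt f y s + ∫ u in s..t, fbar N f (flowp N γt u y) = Fbp N γt f y t :=
    intervalIntegral.integral_add_adjacent_intervals (hcont.intervalIntegrable _ _)
      (hcont.intervalIntegrable _ _)
  have hnn : 0 ≤ ∫ u in s..t, fbar N f (flowp N γt u y) := by
    refine intervalIntegral.integral_nonneg hst fun u _ => ?_
    exact Finset.sum_nonneg fun j _ => (hfpos j _).le
  linarith

theorem Fbp_nonneg (S : FlowSetup btilde γt B) {f : Fin N → ℝ → ℝ}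
    (hfc : ∀ j, Continuous (f j)) (hfpos : ∀ j v, 0 < f j v) (y : Fin N → ℝ)
    {t : ℝ} (ht : 0 ≤ t) : 0 ≤ Fbp N γt f y t := by
  have h0 : Fbp N γt f y 0 = 0 := intervalIntegral.integral_same
  have := S.Fbp_mono hfc hfpos y ht
  rw [h0] at this
  exact this

theorem spv_le_one (S : FlowSetup btilde γt B) {f : Fin N → ℝ → ℝ}
    (hfc : ∀ j, Continuous (f j)) (hfpos : ∀ j v, 0 < f j v) (y : Fin N → ℝ)
    {t : ℝ} (ht : 0 ≤ t) : spv N γt f y t ≤ 1 := by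
  rw [spv, Real.exp_le_one_iff]
  simpa using S.Fbp_nonneg hfc hfpos y ht

/-- agreement of `surv`-style interval integral with `Fbp` for nonneg times -/
theorem Fbp_eq (S : FlowSetup btilde γt B) (f : Fin N → ℝ → ℝ) (y : Fin N → ℝ)
    {t : ℝ} (ht : 0 ≤ t) :
    (∫ s in (0:ℝ)..t, ∑ i, f i (γt s (y i))) = Fbp N γt f y t := by
  refine intervalIntegral.integral_congr fun s hs => ?_
  have hs0 : 0 ≤ s := by
    rcases hs with ⟨h1, _⟩
    simpa [min_eq_left ht] using h1
  refine Finset.sum_congr rfl fun j _ => ?_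
  rw [show flowp N γt s y j = gp γt (s, y j) from rfl, gp_eq γt hs0]

theorem flowN_eq (S : FlowSetup btilde γt B) (y : Fin N → ℝ) {t : ℝ} (ht : 0 ≤ t) :
    (fun j => γt t (y j)) = flowp N γt t y := by
  funext j
  rw [show flowp N γt t y j = gp γt (t, y j) from rfl, gp_eq γt ht]

theorem Fbp_tendsto (S : FlowSetup btilde γt B) {f : Fin N → ℝ → ℝ}
    (hfc : ∀ j, Continuous (f j)) (hfpos : ∀ j v, 0 < f j v) (y : Fin N → ℝ)
    (hdivy : (∫⁻ s in Ioi (0:ℝ), ENNReal.ofReal (∑ i, f i (γt s (y i)))) = ⊤) :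
    Filter.Tendsto (Fbp N γt f y) Filter.atTop Filter.atTop := by
  have hcont : Continuous fun s => fbar N f (flowp N γt s y) := by
    refine continuous_finset_sum _ fun j _ => ?_
    exact (hfc j).comp ((continuous_apply j).comp (S.flowp_cont_t y))
  -- rewrite the divergence hypothesis in terms of flowp
  have hdiv' : (∫⁻ s in Ioi (0:ℝ), ENNReal.ofReal (fbar N f (flowp N γt s y))) = ⊤ := by
    rw [← hdivy]
    refine setLIntegral_congr_fun measurableSet_Ioi (fun s hs => ?_)
    congr 1
    refine Finset.sum_congr rfl fun j _ => ?_
    rw [show flowp N γt s y j = gp γt (s, y j) from rfl, gp_eq γt (le_of_lt hs)]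
  set f0 : ℝ → ENNReal := fun s => ENNReal.ofReal (fbar N f (flowp N γt s y)) with hf0
  have hf0meas : Measurable f0 := hcont.measurable.ennreal_ofReal
  set ν := volume.withDensity f0 with hν
  have hνA : ∀ {A : Set ℝ}, MeasurableSet A → ν A = ∫⁻ s in A, f0 s := by
    intro A hA
    rw [hν, withDensity_apply _ hA]
  have hνtop : ν (Ioi 0) = ⊤ := by rw [hνA measurableSet_Ioi]; exact hdiv'
  have hunion : Ioi (0:ℝ) = ⋃ n : ℕ, Ioc (0:ℝ) (n : ℝ) := by
    ext t
    simp only [mem_Ioi, mem_iUnion, mem_Ioc]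
    constructor
    · intro ht; obtain ⟨n, hn⟩ := exists_nat_ge t; exact ⟨n, ht, hn⟩
    · rintro ⟨n, h1, _⟩; exact h1
  have hsup : (⨆ n : ℕ, ν (Ioc (0:ℝ) (n : ℝ))) = ⊤ := by
    rw [← Directed.measure_iUnion, ← hunion, hνtop]
    intro m n
    rcases le_total m n with h | h
    · exact ⟨n, Ioc_subset_Ioc_right (by exact_mod_cast h), le_refl _⟩
    · exact ⟨m, le_refl _, Ioc_subset_Ioc_right (by exact_mod_cast h)⟩
  have hFbn : ∀ n : ℕ, ENNReal.ofReal (Fbp N γt f y n) = ν (Ioc (0:ℝ) (n : ℝ)) := by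
    intro n
    rw [hνA measurableSet_Ioc]
    have h1 : Fbp N γt f y n = ∫ s in Ioc (0:ℝ) (n:ℝ), fbar N f (flowp N γt s y) := by
      rw [Fbp, intervalIntegral.integral_of_le (by exact_mod_cast Nat.zero_le n : (0:ℝ) ≤ n)]
    rw [h1]
    exact ofReal_integral_eq_lintegral_ofReal
      (hcont.integrableOn_Ioc)
      (Filter.Eventually.of_forall fun s => Finset.sum_nonneg fun j _ => (hfpos j _).le)
  rw [Filter.tendsto_atTop_atTop]
  intro M
  set M' := max M 0 with hM'
  have : ENNReal.ofReal M' < ⨆ n : ℕ, ν (Ioc (0:ℝ) (n : ℝ)) := by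
    rw [hsup]; exact ENNReal.ofReal_lt_top.trans_le le_top
  obtain ⟨n, hn⟩ := lt_iSup_iff.1 this
  rw [← hFbn n] at hn
  have hM'lt : M' < Fbp N γt f y n := by
    by_contra hcon
    push_neg at hcon
    exact absurd (ENNReal.ofReal_le_ofReal hcon) (not_le.2 hn)
  refine ⟨(n : ℝ), fun t ht => ?_⟩
  have := S.Fbp_mono hfc hfpos y ht
  have hM : M ≤ M' := le_max_left _ _
  linarith

end FlowSetup
end HOC
namespace HOC
variable {btilde : ℝ → ℝ} {γt : ℝ → ℝ → ℝ} {B : ℝ} {N : ℕ} {f : Fin N → ℝ → ℝ}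
  {i1 : Fin N} {Q : (Fin N → ℝ) → ℝ} {h : ℝ → ℝ}

namespace FlowSetup

theorem fbar_flowp_cont (S : FlowSetup btilde γt B) (hfc : ∀ j, Continuous (f j))
    (y : Fin N → ℝ) : Continuous fun s => fbar N f (flowp N γt s y) := by
  refine continuous_finset_sum _ fun j _ => ?_
  exact (hfc j).comp ((continuous_apply j).comp (S.flowp_cont_t y))

theorem Fbp_eq_ind (S : FlowSetup btilde γt B) (y : Fin N → ℝ) {t : ℝ} (ht : 0 ≤ t) :
    Fbp N γt f y t = ∫ s, (if s ∈ Ioc (0:ℝ) t then fbar N f (flowp N γt s y) else 0) := by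
  rw [Fbp, intervalIntegral.integral_of_le ht, ← integral_indicator measurableSet_Ioc]
  refine integral_congr_ae (Filter.Eventually.of_forall fun s => ?_)
  simp [Set.indicator_apply]

theorem spv_meas (S : FlowSetup btilde γt B) (hfc : ∀ j, Continuous (f j)) (y : Fin N → ℝ) :
    Measurable (spv N γt f y) :=
  ((S.Fbp_cont hfc y).neg.rexp).measurable

theorem meas_Inner (S : FlowSetup btilde γt B) (hfc : ∀ j, Continuous (f j))
    (hQ : Measurable Q) (hh : Measurable h) :
    Measurable (Inner N γt f i1 Q h) := by
  set G2 : (Fin N → ℝ) × ℝ → ℝ :=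
    fun q => ∫ s, (if s ∈ Ioc (0:ℝ) q.2 then fbar N f (flowp N γt s q.1) else 0) with hG2def
  have hG2 : Measurable G2 := by
    have hint : Measurable fun r : ((Fin N → ℝ) × ℝ) × ℝ =>
        (if r.2 ∈ Ioc (0:ℝ) r.1.2 then fbar N f (flowp N γt r.2 r.1.1) else 0) := by
      refine Measurable.ite ?_ ?_ measurable_const
      · refine MeasurableSet.inter ?_ ?_
        · exact measurableSet_lt measurable_const measurable_snd
        · exact measurableSet_le measurable_snd (measurable_fst.snd)
      · have hflow : Continuous fun r : ((Fin N → ℝ) × ℝ) × ℝ =>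
            fbar N f (flowp N γt r.2 r.1.1) := by
          refine continuous_finset_sum _ fun j _ => ?_
          refine Continuous.comp (hfc j) ?_
          exact ((continuous_apply j).comp (S.flowp_cont.comp
            (continuous_snd.prodMk (continuous_fst.fst)))).congr fun r => rfl
        exact hflow.measurable
    exact (hint.stronglyMeasurable.integral_prod_right').measurable
  set R : (Fin N → ℝ) × ℝ → ℝ := fun q =>
    if 0 < q.2 then
      Real.exp (-(G2 q)) * Q (flowp N γt q.2 q.1) * h (gp γt (q.2, q.1 i1)) else 0 with hRdef
  have hR : Measurable R := by
    refine Measurable.ite (measurableSet_lt measurable_const measurable_snd) ?_ measurable_const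
    refine Measurable.mul (Measurable.mul ?_ ?_) ?_
    · exact Real.continuous_exp.measurable.comp hG2.neg
    · exact hQ.comp ((S.flowp_cont.comp (continuous_snd.prodMk continuous_fst)).measurable)
    · exact hh.comp ((S.gp_cont.comp (continuous_snd.prodMk
        ((continuous_apply i1).comp continuous_fst))).measurable)
  have hmeas : Measurable fun y => ∫ t, R (y, t) :=
    (hR.stronglyMeasurable.integral_prod_right').measurable
  have hfun : Inner N γt f i1 Q h = fun y => ∫ t, R (y, t) := by
    funext y
    have h1 : (fun t => R (y, t))
        = (Ioi (0:ℝ)).indicator (fun t => spv N γt f y t * Q (flowp N γt t y)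
            * h (gp γt (t, y i1))) := by
      funext t
      simp only [hRdef, Set.indicator_apply, mem_Ioi]
      by_cases ht : 0 < t
      · simp only [if_pos ht]
        rw [show G2 (y, t) = Fbp N γt f y t from (S.Fbp_eq_ind y ht.le).symm]
        rfl
      · simp only [if_neg ht]
    rw [Inner, ← integral_indicator measurableSet_Ioi, ← h1]
  rw [hfun]
  exact hmeas

theorem inner_bound (S : FlowSetup btilde γt B) (hfc : ∀ j, Continuous (f j))
    (hfpos : ∀ j v, 0 < f j v) {K' : Set ℝ} (hK : IsClosed K') {c0 D C : ℝ}
    (hc0 : 0 < c0) (hbc : ∀ v ∈ K', c0 ≤ |btilde v|)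
    (hD : ∀ u ∈ K', ∀ v ∈ K', u - v ≤ D) (hD0 : 0 ≤ D)
    (hQm : Measurable Q) (hhm : Measurable h)
    (hC : ∀ z : Fin N → ℝ, |Q z * h (z i1)| ≤ C)
    (hh0 : ∀ v, v ∉ K' → h v = 0) (y : Fin N → ℝ) :
    IntegrableOn (fun t => spv N γt f y t * Q (flowp N γt t y) * h (gp γt (t, y i1)))
        (Ioi 0) volume
      ∧ |Inner N γt f i1 Q h y| ≤ C * (D / c0) := by
  set w := y i1 with hw
  set F := fun t => spv N γt f y t * Q (flowp N γt t y) * h (gp γt (t, w)) with hF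
  have hgpc : Continuous (fun t : ℝ => γt (max t 0) w) :=
    S.gp_cont.comp (continuous_id.prodMk continuous_const)
  set A := Ioi 0 ∩ {t : ℝ | γt (max t 0) w ∈ K'} with hA
  have hAmeas : MeasurableSet A :=
    measurableSet_Ioi.inter (hK.preimage hgpc).measurableSet
  have hAvol : volume A ≤ ENNReal.ofReal (D / c0) := S.occupation hK hc0 hbc hD w
  have hAfin : volume A < ⊤ := lt_of_le_of_lt hAvol ENNReal.ofReal_lt_top
  have hC0 : 0 ≤ C := le_trans (abs_nonneg _) (hC (fun _ => 0))
  set g0 := A.indicator (fun _ : ℝ => C) with hg0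
  have hg0int : Integrable g0 (volume.restrict (Ioi 0)) := by
    rw [hg0, integrable_indicator_iff hAmeas]
    refine integrableOn_const (ne_of_lt ?_)
    exact lt_of_le_of_lt (le_trans (Measure.restrict_apply_le _ _) (le_refl _)) hAfin
  have hmeasF : AEStronglyMeasurable F (volume.restrict (Ioi 0)) := by
    refine Measurable.aestronglyMeasurable ?_
    refine Measurable.mul (Measurable.mul (S.spv_meas hfc y) ?_) ?_
    · exact hQm.comp (S.flowp_cont_t y).measurable
    · exact hhm.comp (S.gp_cont.comp (continuous_id.prodMk continuous_const)).measurable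
  have hbound : ∀ᵐ t ∂(volume.restrict (Ioi 0)), ‖F t‖ ≤ g0 t := by
    refine (ae_restrict_iff' measurableSet_Ioi).2 (Filter.Eventually.of_forall fun t ht => ?_)
    by_cases hmem : γt (max t 0) w ∈ K'
    · have htA : t ∈ A := ⟨ht, hmem⟩
      rw [hg0, indicator_of_mem htA]
      have hz : gp γt (t, w) = flowp N γt t y i1 := rfl
      have habs : ‖F t‖ = spv N γt f y t * |Q (flowp N γt t y) * h (flowp N γt t y i1)| := by
        show ‖spv N γt f y t * Q (flowp N γt t y) * h (gp γt (t, w))‖ = _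
        rw [Real.norm_eq_abs, mul_assoc, abs_mul,
          abs_of_pos (show (0:ℝ) < spv N γt f y t from Real.exp_pos _), hz]
      rw [habs]
      calc spv N γt f y t * |Q (flowp N γt t y) * h (flowp N γt t y i1)|
          ≤ 1 * C := by
            refine mul_le_mul (S.spv_le_one hfc hfpos y (le_of_lt ht)) (hC _)
              (abs_nonneg _) zero_le_one
        _ = C := one_mul C
    · have hzero : h (gp γt (t, w)) = 0 := hh0 _ (by
        rw [show gp γt (t, w) = γt (max t 0) w from rfl]; exact hmem)
      rw [hF]
      simp only [hzero, mul_zero, norm_zero]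
      exact indicator_nonneg (fun _ _ => hC0) t
  have hFint : IntegrableOn F (Ioi 0) volume := Integrable.mono' hg0int hmeasF hbound
  refine ⟨hFint, ?_⟩
  have hle : ‖∫ t in Ioi (0:ℝ), F t‖ ≤ ∫ t in Ioi (0:ℝ), g0 t :=
    norm_integral_le_of_norm_le hg0int hbound
  have hg0val : ∫ t in Ioi (0:ℝ), g0 t = C * (volume A).toReal := by
    rw [hg0, integral_indicator hAmeas, setIntegral_const, measureReal_restrict_apply hAmeas,
      inter_eq_self_of_subset_left (show A ⊆ Ioi 0 from inter_subset_left), smul_eq_mul,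
      mul_comm, measureReal_def]
  have htoReal : (volume A).toReal ≤ D / c0 :=
    ENNReal.toReal_le_of_le_ofReal (div_nonneg hD0 hc0.le) hAvol
  calc |Inner N γt f i1 Q h y| = ‖∫ t in Ioi (0:ℝ), F t‖ := by rw [Inner, Real.norm_eq_abs]
    _ ≤ ∫ t in Ioi (0:ℝ), g0 t := hle
    _ = C * (volume A).toReal := hg0val
    _ ≤ C * (D / c0) := mul_le_mul_of_nonneg_left htoReal hC0

end FlowSetup
end HOC
namespace HOC
variable {btilde : ℝ → ℝ} {γt : ℝ → ℝ → ℝ} {B : ℝ} {N : ℕ} {f : Fin N → ℝ → ℝ}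
  {i1 : Fin N}

namespace FlowSetup

theorem gp_hasDeriv (S : FlowSetup btilde γt B) (v : ℝ) {t : ℝ} (ht : 0 < t) :
    HasDerivAt (fun s => gp γt (s, v)) (btilde (gp γt (t, v))) t := by
  have hev : (fun s => gp γt (s, v)) =ᶠ[nhds t] (fun s => γt s v) :=
    Filter.eventually_of_mem (Ioi_mem_nhds ht) (fun s hs => gp_eq γt (le_of_lt hs) v)
  have h := (S.hγ v t ht.le).congr_of_eventuallyEq hev
  rwa [gp_eq γt ht.le v]

/-- The core identity: integrating the derivative of
`t ↦ e(y,t) H(γ_t y) φ(γ̃_t(y^{i1}))` over `(0,∞)`. -/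
theorem key_identity (S : FlowSetup btilde γt B)
    (hfc : ∀ j, Continuous (f j)) (hfpos : ∀ j v, 0 < f j v)
    {H G' : (Fin N → ℝ) → ℝ} {φ φ' h1 h2 : ℝ → ℝ}
    (hH : ContDiff ℝ 1 H)
    (hφd : ∀ v, HasDerivAt φ (φ' v) v) (hφc : Continuous φ)
    (ptwise : ∀ z : Fin N → ℝ,
      -(fbar N f z) * (H z * φ (z i1)) + ((fderiv ℝ H z) (fun j => btilde (z j)) * φ (z i1)
        + H z * (φ' (z i1) * btilde (z i1)))
      = H z * h2 (z i1) - G' z * h1 (z i1))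
    {cH cφ : ℝ} (hcH : ∀ z, |H z| ≤ cH) (hcφ : ∀ v, |φ v| ≤ cφ)
    (y : Fin N → ℝ)
    (hdivy : (∫⁻ s in Ioi (0:ℝ), ENNReal.ofReal (∑ i, f i (γt s (y i)))) = ⊤)
    (int1 : IntegrableOn
      (fun t => spv N γt f y t * H (flowp N γt t y) * h2 (gp γt (t, y i1))) (Ioi 0) volume)
    (int2 : IntegrableOn
      (fun t => spv N γt f y t * G' (flowp N γt t y) * h1 (gp γt (t, y i1))) (Ioi 0) volume) :
    Inner N γt f i1 H h2 y - Inner N γt f i1 G' h1 y = -(H y * φ (y i1)) := by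
  set F1 := fun t => spv N γt f y t * H (flowp N γt t y) * h2 (gp γt (t, y i1)) with hF1
  set F2 := fun t => spv N γt f y t * G' (flowp N γt t y) * h1 (gp γt (t, y i1)) with hF2
  set u := fun t => spv N γt f y t * (H (flowp N γt t y) * φ (gp γt (t, y i1))) with hu
  -- the derivative of u
  have hud : ∀ t ∈ Ioi (0:ℝ), HasDerivAt u (F1 t - F2 t) t := by
    intro t ht
    rw [mem_Ioi] at ht
    have hspd : HasDerivAt (spv N γt f y)
        (spv N γt f y t * -(fbar N f (flowp N γt t y))) t := by
      have h := ((S.Fbp_hasDeriv hfc y t).neg).exp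
      exact h
    have hcurve : HasDerivAt (fun s => flowp N γt s y)
        (fun j => btilde (gp γt (t, y j))) t :=
      hasDerivAt_pi.2 fun j => S.gp_hasDeriv (y j) ht
    have hHder : HasDerivAt (fun s => H (flowp N γt s y))
        ((fderiv ℝ H (flowp N γt t y)) (fun j => btilde (gp γt (t, y j)))) t :=
      (hH.differentiable one_ne_zero (flowp N γt t y)).hasFDerivAt.comp_hasDerivAt t hcurve
    have hφder : HasDerivAt (fun s => φ (gp γt (s, y i1)))
        (φ' (gp γt (t, y i1)) * btilde (gp γt (t, y i1))) t :=
      (hφd _).comp t (S.gp_hasDeriv (y i1) ht)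
    have h := hspd.mul (hHder.mul hφder)
    have hVeq : (spv N γt f y t * -(fbar N f (flowp N γt t y)))
          * (H (flowp N γt t y) * φ (gp γt (t, y i1)))
        + spv N γt f y t * ((fderiv ℝ H (flowp N γt t y)) (fun j => btilde (gp γt (t, y j)))
            * φ (gp γt (t, y i1))
          + H (flowp N γt t y) * (φ' (gp γt (t, y i1)) * btilde (gp γt (t, y i1))))
        = F1 t - F2 t := by
      have hpt := ptwise (flowp N γt t y)
      show (spv N γt f y t * -(fbar N f (flowp N γt t y)))
          * (H (flowp N γt t y) * φ ((flowp N γt t y) i1))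
        + spv N γt f y t * ((fderiv ℝ H (flowp N γt t y)) (fun j => btilde ((flowp N γt t y) j))
            * φ ((flowp N γt t y) i1)
          + H (flowp N γt t y) * (φ' ((flowp N γt t y) i1) * btilde ((flowp N γt t y) i1)))
        = spv N γt f y t * H (flowp N γt t y) * h2 ((flowp N γt t y) i1)
          - spv N γt f y t * G' (flowp N γt t y) * h1 ((flowp N γt t y) i1)
      linear_combination (spv N γt f y t) * hpt
    exact hVeq ▸ h
  -- continuity at 0 from the right
  have hu0cont : ContinuousWithinAt u (Ici 0) 0 := by
    have hcont : Continuous u := by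
      refine Continuous.mul ?_ (Continuous.mul ?_ ?_)
      · exact ((S.Fbp_cont hfc y).neg).rexp
      · exact (hH.continuous).comp (S.flowp_cont_t y)
      · exact hφc.comp (S.gp_cont.comp (continuous_id.prodMk continuous_const))
    exact hcont.continuousAt.continuousWithinAt
  -- limit at infinity
  have hutend : Filter.Tendsto u Filter.atTop (nhds 0) := by
    have hsptend : Filter.Tendsto (fun t => spv N γt f y t) Filter.atTop (nhds 0) := by
      refine Real.tendsto_exp_atBot.comp ?_
      exact (Filter.tendsto_neg_atTop_atBot).comp (S.Fbp_tendsto hfc hfpos y hdivy)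
    have hg : Filter.Tendsto (fun t => (cH * cφ) * spv N γt f y t) Filter.atTop (nhds 0) := by
      simpa using hsptend.const_mul (cH * cφ)
    refine squeeze_zero_norm' ?_ hg
    refine Filter.Eventually.of_forall fun t => ?_
    have hcφ0 : 0 ≤ cφ := le_trans (abs_nonneg _) (hcφ 0)
    have habs : ‖u t‖ = spv N γt f y t * |H (flowp N γt t y) * φ (gp γt (t, y i1))| := by
      show ‖spv N γt f y t * (H (flowp N γt t y) * φ (gp γt (t, y i1)))‖ = _
      rw [Real.norm_eq_abs, abs_mul,
        abs_of_pos (show (0:ℝ) < spv N γt f y t from Real.exp_pos _)]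
    rw [habs, mul_comm (cH * cφ) (spv N γt f y t)]
    refine mul_le_mul_of_nonneg_left ?_ (Real.exp_pos _).le
    rw [abs_mul]
    exact mul_le_mul (hcH _) (hcφ _) (abs_nonneg _) (le_trans (abs_nonneg _) (hcH (fun _ => 0)))
  have hint12 : IntegrableOn (fun t => F1 t - F2 t) (Ioi 0) volume := int1.sub int2
  have hFTC : ∫ t in Ioi (0:ℝ), (F1 t - F2 t) = 0 - u 0 :=
    integral_Ioi_of_hasDerivAt_of_tendsto hu0cont hud hint12 hutend
  have hu0 : u 0 = H y * φ (y i1) := by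
    have hsp0 : spv N γt f y 0 = 1 := by
      rw [spv, show Fbp N γt f y 0 = 0 from intervalIntegral.integral_same]
      simp
    have hflow0 : flowp N γt 0 y = y := by
      funext j
      rw [show flowp N γt 0 y j = gp γt (0, y j) from rfl, gp_eq γt le_rfl, S.hγ0]
    have hgp0 : gp γt (0, y i1) = y i1 := by rw [gp_eq γt le_rfl, S.hγ0]
    show spv N γt f y 0 * (H (flowp N γt 0 y) * φ (gp γt (0, y i1))) = H y * φ (y i1)
    rw [hsp0, hflow0, hgp0, one_mul]
  have hsub : Inner N γt f i1 H h2 y - Inner N γt f i1 G' h1 y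
      = ∫ t in Ioi (0:ℝ), (F1 t - F2 t) := (integral_sub int1 int2).symm
  rw [hsub, hFTC, hu0, zero_sub]

end FlowSetup
end HOC
namespace HOC

theorem deriv_zero_of_nmem_tsupport {g : ℝ → ℝ} {v : ℝ} (hv : v ∉ tsupport g) :
    deriv g v = 0 := by
  by_contra h
  exact hv (support_deriv_subset (by simpa [Function.mem_support] using h))

theorem tsupport_deriv_subset' {g : ℝ → ℝ} : tsupport (deriv g) ⊆ tsupport g :=
  closure_minimal support_deriv_subset (isClosed_tsupport g)

theorem deriv2_zero_of_nmem_tsupport {g : ℝ → ℝ} {v : ℝ} (hv : v ∉ tsupport g) :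
    deriv (deriv g) v = 0 :=
  deriv_zero_of_nmem_tsupport (fun hmem => hv (tsupport_deriv_subset' hmem))

theorem phi_hasDeriv {btilde g : ℝ → ℝ} (hbdiff : Differentiable ℝ btilde)
    (hg1 : Differentiable ℝ (deriv g))
    (hsupp : tsupport g ⊆ {v : ℝ | btilde v ≠ 0}) (v : ℝ) :
    HasDerivAt (fun w => deriv g w / btilde w)
      ((deriv (deriv g) v * btilde v - deriv g v * deriv btilde v) / (btilde v)^2) v := by
  by_cases hb : btilde v = 0
  · have hvn : v ∉ tsupport g := fun hmem => hsupp hmem hb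
    have hp : deriv g v = 0 := deriv_zero_of_nmem_tsupport hvn
    have hq : deriv (deriv g) v = 0 := deriv2_zero_of_nmem_tsupport hvn
    rw [hp, hq]
    simp only [zero_mul, sub_zero, zero_div]
    have hU : ∀ᶠ w in nhds v, w ∉ tsupport g :=
      (isClosed_tsupport g).isOpen_compl.eventually_mem hvn
    have hev : (fun w => deriv g w / btilde w) =ᶠ[nhds v] (fun _ => (0:ℝ)) := by
      filter_upwards [hU] with w hw
      rw [deriv_zero_of_nmem_tsupport hw, zero_div]
    exact (hasDerivAt_const v (0:ℝ)).congr_of_eventuallyEq hev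
  · exact ((hg1 v).hasDerivAt).div ((hbdiff v).hasDerivAt) hb

theorem phi'_cont {btilde g : ℝ → ℝ} (hbc : Continuous btilde)
    (hb'c : Continuous (deriv btilde)) (hg1c : Continuous (deriv g))
    (hg2c : Continuous (deriv (deriv g)))
    (hsupp : tsupport g ⊆ {v : ℝ | btilde v ≠ 0}) :
    Continuous fun v => (deriv (deriv g) v * btilde v - deriv g v * deriv btilde v)
      / (btilde v)^2 := by
  rw [continuous_iff_continuousAt]
  intro v
  by_cases hb : btilde v = 0
  · have hvn : v ∉ tsupport g := fun hmem => hsupp hmem hb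
    have hU : ∀ᶠ w in nhds v, w ∉ tsupport g :=
      (isClosed_tsupport g).isOpen_compl.eventually_mem hvn
    have hev : (fun w => (deriv (deriv g) w * btilde w - deriv g w * deriv btilde w)
        / (btilde w)^2) =ᶠ[nhds v] (fun _ => (0:ℝ)) := by
      filter_upwards [hU] with w hw
      rw [deriv_zero_of_nmem_tsupport hw, deriv2_zero_of_nmem_tsupport hw]
      simp
    exact continuousAt_const.congr hev.symm
  · refine ContinuousAt.div ?_ ?_ (pow_ne_zero 2 hb)
    · exact ((hg2c.mul hbc).sub (hg1c.mul hb'c)).continuousAt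
    · exact (hbc.pow 2).continuousAt

end HOC


/-- the integration-by-parts identity
`π_H(g'') = π_{G(H)}(g') − Σ_{i=2}^N π_{G_i(H)}((g ∘ Δ_i^1)')`
for every `g ∈ C_c^∞(ℝ)` vanishing near `0` with support in `{b̃ ≠ 0}`. -/
theorem integration_by_parts_marginal
    (N k : ℕ) (hN : 1 ≤ N) (F B A a : ℝ)
    (hF : 0 < F) (hB : 0 < B) (hA : 0 < A) (ha : 0 < a)
    (btilde : ℝ → ℝ) (hbC : ContDiff ℝ (k + 1 : ℕ) btilde)
    (hbB : ∀ l ≤ k + 1, ∀ v : ℝ, |iteratedDeriv l btilde v| ≤ B)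
    (γt : ℝ → ℝ → ℝ) (hγ0 : ∀ v : ℝ, γt 0 v = v)
    (hγ : ∀ (v t : ℝ), 0 ≤ t → HasDerivAt (fun s => γt s v) (btilde (γt t v)) t)
    (f : Fin N → ℝ → ℝ) (hfpos : ∀ i v, 0 < f i v)
    (hfLip : ∀ i, ∃ L : NNReal, LipschitzWith L (f i))
    (hfC : ∀ i, ContDiff ℝ (k : ℕ) (f i))
    (hfF : ∀ i, ∀ l ≤ k, ∀ v : ℝ, |iteratedDeriv l (f i) v| ≤ F)
    (aij : Fin N → Fin N → ℝ → ℝ)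
    (haC : ∀ i j, i ≠ j → ContDiff ℝ (⊤ : ℕ∞) (aij i j))
    (haA : ∀ i j, i ≠ j → ∀ (l : ℕ) (v : ℝ), |iteratedDeriv l (aij i j) v| ≤ A)
    (haInv : ∀ i j, i ≠ j → ∀ v : ℝ, a ≤ |deriv (fun w => w + aij i j w) v|)
    (hdiv : ∀ x : Fin N → ℝ,
      (∫⁻ s in Ioi (0:ℝ), ENNReal.ofReal (∑ i, f i (γt s (x i)))) = ⊤)
    (m : Measure (Fin N → ℝ)) [IsProbabilityMeasure m]
    (hrep : ∀ g : (Fin N → ℝ) → ℝ, Measurable g → (∃ C, ∀ x, |g x| ≤ C) →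
      ∫ x, g x ∂m
        = ∑ i, ∫ x, (f i (x i) *
            ∫ t in Ioi (0:ℝ),
              surv N γt f (jmap N aij i x) t * g (flowN N γt t (jmap N aij i x))) ∂m)
    (H : (Fin N → ℝ) → ℝ) (hH : ContDiff ℝ 1 H)
    (hHbdd : ∃ c : ℝ, ∀ x, |H x| ≤ c)
    (hHgrad : ∃ c : ℝ, ∀ x, ‖fderiv ℝ H x‖ ≤ c) :
    ∀ g : ℝ → ℝ, ContDiff ℝ (⊤ : ℕ∞) g → HasCompactSupport g →
      (∃ δ : ℝ, 0 < δ ∧ ∀ v : ℝ, |v| < δ → g v = 0) →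
      tsupport g ⊆ {v : ℝ | btilde v ≠ 0} →
      piH N γt f aij ⟨0, hN⟩ m H (deriv (deriv g))
        = piH N γt f aij ⟨0, hN⟩ m
            (fun x => ((∑ i, f i (x i)) * H x
                - fderiv ℝ H x (fun j => btilde (x j))
                + H x * deriv btilde (x ⟨0, hN⟩)) / btilde (x ⟨0, hN⟩))
            (deriv g)
          - ∑ i ∈ Finset.univ.erase (⟨0, hN⟩ : Fin N),
              piH N γt f aij ⟨0, hN⟩ m
                (fun x => f i (x i) * H (jmap N aij i x) /
                  (btilde (x ⟨0, hN⟩ + aij i ⟨0, hN⟩ (x ⟨0, hN⟩)) *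
                    deriv (fun w => w + aij i ⟨0, hN⟩ w) (x ⟨0, hN⟩)))
                (deriv (fun v => g (v + aij i ⟨0, hN⟩ v))) := by
  intro g hgsm hgcs hδ hsupp
  -- trivial case: empty support
  by_cases hempty : tsupport g = ∅
  · have hg0 : g = fun _ => (0:ℝ) :=
      funext fun v => image_eq_zero_of_notMem_tsupport (by simp [hempty])
    rw [hg0]
    simp [piH, deriv_const', mul_zero, integral_zero, Finset.sum_const_zero]
  set i1 : Fin N := ⟨0, hN⟩ with hi1
  -- basic flow setup
  have hb1 : (1 : WithTop ℕ∞) ≤ ((k+1 : ℕ) : WithTop ℕ∞) := by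
    exact_mod_cast Nat.succ_le_succ (Nat.zero_le k)
  have htop : (1 : WithTop ℕ∞) ≤ ((⊤ : ℕ∞) : WithTop ℕ∞) := by exact_mod_cast le_top
  have hbdiff : Differentiable ℝ btilde := hbC.differentiable (by simp)
  have hbB0 : ∀ v, |btilde v| ≤ B := fun v => by
    simpa [iteratedDeriv_zero] using hbB 0 (Nat.zero_le _) v
  have hbB1 : ∀ v, |deriv btilde v| ≤ B := fun v => by
    simpa [iteratedDeriv_one] using hbB 1 (Nat.succ_le_succ (Nat.zero_le k)) v
  have S : HOC.FlowSetup btilde γt B := ⟨hB, hbdiff, hbB0, hbB1, hγ0, hγ⟩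
  have hb'c : Continuous (deriv btilde) := hbC.continuous_deriv hb1
  have hfc : ∀ j, Continuous (f j) := fun j => (hfLip j).choose_spec.continuous
  have hfF0 : ∀ j v, |f j v| ≤ F := fun j v => by
    simpa [iteratedDeriv_zero] using hfF j 0 (Nat.zero_le _) v
  -- facts about g
  have hg1 : ContDiff ℝ (⊤ : ℕ∞) (deriv g) := (contDiff_infty_iff_deriv.mp hgsm).2
  have hg1d : Differentiable ℝ (deriv g) := hg1.differentiable (by simp)
  have hg1c : Continuous (deriv g) := hg1.continuous
  have hg2c : Continuous (deriv (deriv g)) := ((contDiff_infty_iff_deriv.mp hg1).2).continuous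
  have hgd : Differentiable ℝ g := hgsm.differentiable (by simp)
  -- φ and its derivative
  set φ : ℝ → ℝ := fun v => deriv g v / btilde v with hφdef
  set φ' : ℝ → ℝ := fun v =>
    (deriv (deriv g) v * btilde v - deriv g v * deriv btilde v) / (btilde v)^2 with hφ'def
  have hφd : ∀ v, HasDerivAt φ (φ' v) v := HOC.phi_hasDeriv hbdiff hg1d hsupp
  have hφc : Continuous φ := continuous_iff_continuousAt.2 fun v => (hφd v).continuousAt
  have hφ'c : Continuous φ' := HOC.phi'_cont S.bcont hb'c hg1c hg2c hsupp
  have hφsupp : ∀ v, v ∉ tsupport g → φ v = 0 := fun v hv => by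
    rw [hφdef]
    simp only []
    rw [HOC.deriv_zero_of_nmem_tsupport hv, zero_div]
  have hφ'supp : ∀ v, v ∉ tsupport g → φ' v = 0 := fun v hv => by
    rw [hφ'def]
    simp only []
    rw [HOC.deriv_zero_of_nmem_tsupport hv, HOC.deriv2_zero_of_nmem_tsupport hv]
    simp
  -- bounds
  obtain ⟨cH, hcH⟩ := hHbdd
  have hcH0 : 0 ≤ cH := le_trans (abs_nonneg _) (hcH (fun _ => 0))
  obtain ⟨cH', hcH'⟩ := hHgrad
  have hcH'0 : 0 ≤ cH' := le_trans (norm_nonneg _) (hcH' (fun _ => 0))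
  have hφcs : HasCompactSupport φ := HasCompactSupport.intro hgcs hφsupp
  obtain ⟨cφ, hcφ'⟩ := hφcs.exists_bound_of_continuous hφc
  have hcφ : ∀ v, |φ v| ≤ cφ := fun v => by simpa [Real.norm_eq_abs] using hcφ' v
  have hg1cs : HasCompactSupport (deriv g) := hgcs.deriv
  have hg2cs : HasCompactSupport (deriv (deriv g)) := hg1cs.deriv
  obtain ⟨cg1, hcg1'⟩ := hg1cs.exists_bound_of_continuous hg1c
  have hcg1 : ∀ v, |deriv g v| ≤ cg1 := fun v => by simpa [Real.norm_eq_abs] using hcg1' v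
  have hcg10 : 0 ≤ cg1 := le_trans (abs_nonneg _) (hcg1 0)
  obtain ⟨cg2, hcg2'⟩ := hg2cs.exists_bound_of_continuous hg2c
  have hcg2 : ∀ v, |deriv (deriv g) v| ≤ cg2 := fun v => by
    simpa [Real.norm_eq_abs] using hcg2' v
  have hcg20 : 0 ≤ cg2 := le_trans (abs_nonneg _) (hcg2 0)
  -- the compact support set and constants
  set K' := tsupport g with hK'def
  have hKcl : IsClosed K' := isClosed_tsupport g
  have hKne : K'.Nonempty := nonempty_iff_ne_empty.2 hempty
  obtain ⟨v₀, hv₀K, hv₀min⟩ := hgcs.exists_isMinOn hKne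
    ((continuous_abs.comp S.bcont).continuousOn)
  set c0 := |btilde v₀| with hc0def
  have hc0 : 0 < c0 := abs_pos.2 (hsupp hv₀K)
  have hbc : ∀ v ∈ K', c0 ≤ |btilde v| := fun v hv => hv₀min hv
  set D := sSup K' - sInf K' with hDdef
  have hD : ∀ u ∈ K', ∀ v ∈ K', u - v ≤ D := fun u hu v hv =>
    sub_le_sub (le_csSup hgcs.bddAbove hu) (csInf_le hgcs.bddBelow hv)
  have hD0 : 0 ≤ D := by
    obtain ⟨u, hu⟩ := hKne
    have := hD u hu u hu
    linarith
  -- G-hat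
  set Gh : (Fin N → ℝ) → ℝ := fun x => ((∑ i, f i (x i)) * H x
      - fderiv ℝ H x (fun j => btilde (x j))
      + H x * deriv btilde (x i1)) / btilde (x i1) with hGhdef
  -- measurability
  have hHm : Measurable H := (hH.continuous).measurable
  have hfdHc : Continuous fun x : Fin N → ℝ => (fderiv ℝ H x) (fun j => btilde (x j)) :=
    (hH.continuous_fderiv one_ne_zero).clm_apply (continuous_pi fun j =>
      S.bcont.comp (continuous_apply j))
  have hGhm : Measurable Gh := by
    refine Measurable.div ?_ ((S.bcont.comp (continuous_apply i1)).measurable)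
    refine Measurable.add (Measurable.sub ?_ hfdHc.measurable) ?_
    · exact ((continuous_finset_sum _ fun j _ => (hfc j).comp (continuous_apply j)).mul
        hH.continuous).measurable
    · exact (hH.continuous.mul (hb'c.comp (continuous_apply i1))).measurable
  have hg1m : Measurable (deriv g) := hg1c.measurable
  have hg2m : Measurable (deriv (deriv g)) := hg2c.measurable
  -- pointwise algebraic identity feeding the key lemma
  have ptwise : ∀ z : Fin N → ℝ,
      -(HOC.fbar N f z) * (H z * φ (z i1)) + ((fderiv ℝ H z) (fun j => btilde (z j)) * φ (z i1)
        + H z * (φ' (z i1) * btilde (z i1)))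
      = H z * deriv (deriv g) (z i1) - Gh z * deriv g (z i1) := by
    intro z
    by_cases hb : btilde (z i1) = 0
    · have hzn : z i1 ∉ tsupport g := fun hmem => hsupp hmem hb
      rw [hφsupp _ hzn, hφ'supp _ hzn, HOC.deriv_zero_of_nmem_tsupport hzn,
        HOC.deriv2_zero_of_nmem_tsupport hzn]
      ring
    · rw [hφdef, hφ'def, hGhdef]
      simp only [HOC.fbar]
      field_simp
      ring
  -- bounds needed for inner_bound
  have hC1 : ∀ z : Fin N → ℝ, |H z * deriv (deriv g) (z i1)| ≤ cH * cg2 := fun z => by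
    rw [abs_mul]
    exact mul_le_mul (hcH z) (hcg2 _) (abs_nonneg _) hcH0
  set CN := (N : ℝ) * F * cH + cH' * B + cH * B with hCNdef
  have hCN0 : 0 ≤ CN := by positivity
  have hC2 : ∀ z : Fin N → ℝ, |Gh z * deriv g (z i1)| ≤ CN / c0 * cg1 := by
    intro z
    by_cases hzK : z i1 ∈ K'
    · have hbz : c0 ≤ |btilde (z i1)| := hbc _ hzK
      have hnum : |(∑ i, f i (z i)) * H z - fderiv ℝ H z (fun j => btilde (z j))
          + H z * deriv btilde (z i1)| ≤ CN := by
        have h1 : |(∑ i, f i (z i)) * H z| ≤ (N : ℝ) * F * cH := by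
          rw [abs_mul]
          refine mul_le_mul ?_ (hcH z) (abs_nonneg _) (by positivity)
          calc |∑ i, f i (z i)| ≤ ∑ i, |f i (z i)| := Finset.abs_sum_le_sum_abs _ _
            _ ≤ ∑ _i : Fin N, F := Finset.sum_le_sum fun i _ => hfF0 i (z i)
            _ = (N : ℝ) * F := by simp [mul_comm]
        have h2 : |fderiv ℝ H z (fun j => btilde (z j))| ≤ cH' * B := by
          rw [← Real.norm_eq_abs]
          refine le_trans ((fderiv ℝ H z).le_opNorm _) ?_
          refine mul_le_mul (hcH' z) ?_ (norm_nonneg _) hcH'0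
          rw [pi_norm_le_iff_of_nonneg hB.le]
          intro j
          simpa [Real.norm_eq_abs] using hbB0 (z j)
        have h3 : |H z * deriv btilde (z i1)| ≤ cH * B := by
          rw [abs_mul]
          exact mul_le_mul (hcH z) (hbB1 _) (abs_nonneg _) hcH0
        calc |(∑ i, f i (z i)) * H z - fderiv ℝ H z (fun j => btilde (z j))
            + H z * deriv btilde (z i1)|
            ≤ |(∑ i, f i (z i)) * H z - fderiv ℝ H z (fun j => btilde (z j))|
              + |H z * deriv btilde (z i1)| := abs_add_le _ _
          _ ≤ (|(∑ i, f i (z i)) * H z| + |fderiv ℝ H z (fun j => btilde (z j))|)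
              + |H z * deriv btilde (z i1)| := by
              refine add_le_add (abs_sub _ _) le_rfl
          _ ≤ CN := by rw [hCNdef]; linarith
      have hGz : |Gh z| ≤ CN / c0 := by
        rw [hGhdef]
        simp only []
        rw [abs_div]
        exact div_le_div₀ hCN0 hnum hc0 hbz
      rw [abs_mul]
      exact mul_le_mul hGz (hcg1 _) (abs_nonneg _) (by positivity)
    · rw [HOC.deriv_zero_of_nmem_tsupport hzK, mul_zero, abs_zero]
      positivity
  have hh0g2 : ∀ v, v ∉ K' → deriv (deriv g) v = 0 := fun v hv =>
    HOC.deriv2_zero_of_nmem_tsupport hv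
  have hh0g1 : ∀ v, v ∉ K' → deriv g v = 0 := fun v hv =>
    HOC.deriv_zero_of_nmem_tsupport hv
  -- integrability and bounds of the inner integrals
  have hIB1 := fun y => S.inner_bound hfc hfpos hKcl hc0 hbc hD hD0 hHm hg2m hC1 hh0g2 y
  have hIB2 := fun y => S.inner_bound hfc hfpos hKcl hc0 hbc hD hD0 hGhm hg1m hC2 hh0g1 y
  -- the key identity
  have key : ∀ y : Fin N → ℝ,
      HOC.Inner N γt f i1 H (deriv (deriv g)) y - HOC.Inner N γt f i1 Gh (deriv g) y
        = -(H y * φ (y i1)) := fun y =>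
    S.key_identity hfc hfpos hH hφd hφc ptwise hcH hcφ y (hdiv y) (hIB1 y).1 (hIB2 y).1
  -- rewriting piH in terms of Inner
  have hpiH : ∀ (Q : (Fin N → ℝ) → ℝ) (h : ℝ → ℝ),
      piH N γt f aij i1 m Q h
        = ∑ i, ∫ x, f i (x i) * HOC.Inner N γt f i1 Q h (jmap N aij i x) ∂m := by
    intro Q h
    rw [piH]
    refine Finset.sum_congr rfl fun i _ => ?_
    refine integral_congr_ae (Filter.Eventually.of_forall fun x => ?_)
    simp only []
    congr 1
    rw [HOC.Inner]
    refine setIntegral_congr_fun measurableSet_Ioi fun t ht => ?_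
    rw [mem_Ioi] at ht
    have hsurv : surv N γt f (jmap N aij i x) t = HOC.spv N γt f (jmap N aij i x) t := by
      rw [surv, HOC.spv, S.Fbp_eq f (jmap N aij i x) ht.le]
    have hflow : flowN N γt t (jmap N aij i x) = HOC.flowp N γt t (jmap N aij i x) :=
      S.flowN_eq _ ht.le
    have hgp : γt t (jmap N aij i x i1) = HOC.gp γt (t, jmap N aij i x i1) :=
      (HOC.gp_eq γt ht.le _).symm
    rw [hsurv, hflow, hgp]
  -- measurability of Inner maps
  have hmeas1 : Measurable (HOC.Inner N γt f i1 H (deriv (deriv g))) :=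
    S.meas_Inner hfc hHm hg2m
  have hmeas2 : Measurable (HOC.Inner N γt f i1 Gh (deriv g)) :=
    S.meas_Inner hfc hGhm hg1m
  have hjmapc : ∀ i, Continuous (jmap N aij i) := by
    intro i
    refine continuous_pi fun j => ?_
    by_cases hji : j = i
    · simp only [jmap, if_pos hji]
      exact continuous_const
    · simp only [jmap, if_neg hji]
      exact (continuous_apply j).add (((haC i j (Ne.symm hji)).continuous).comp
        (continuous_apply j))
  -- the ψ functions
  set ψ : Fin N → (Fin N → ℝ) → ℝ := fun i x =>
    f i (x i) * (H (jmap N aij i x) * φ (jmap N aij i x i1)) with hψdef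
  have hψm : ∀ i, Measurable (ψ i) := by
    intro i
    refine Measurable.mul (((hfc i).comp (continuous_apply i)).measurable) ?_
    exact ((hH.continuous.comp (hjmapc i)).mul
      (hφc.comp ((continuous_apply i1).comp (hjmapc i)))).measurable
  have hψb : ∀ i x, |ψ i x| ≤ F * (cH * cφ) := by
    intro i x
    rw [hψdef]
    simp only []
    rw [abs_mul]
    refine mul_le_mul (hfF0 _ _) ?_ (abs_nonneg _) hF.le
    rw [abs_mul]
    exact mul_le_mul (hcH _) (hcφ _) (abs_nonneg _) hcH0
  -- integrability of the Ψ functions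
  have hcφ0 : 0 ≤ cφ := le_trans (abs_nonneg _) (hcφ 0)
  have hΨ1int : ∀ i : Fin N, Integrable
      (fun x => f i (x i) * HOC.Inner N γt f i1 H (deriv (deriv g)) (jmap N aij i x)) m := by
    intro i
    refine Integrable.mono' (integrable_const (F * (cH * cg2 * (D / c0)))) ?_ ?_
    · exact (Measurable.mul (((hfc i).comp (continuous_apply i)).measurable)
        (hmeas1.comp (hjmapc i).measurable)).aestronglyMeasurable
    · refine Filter.Eventually.of_forall fun x => ?_
      rw [Real.norm_eq_abs, abs_mul]
      refine mul_le_mul (hfF0 _ _) ?_ (abs_nonneg _) hF.le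
      exact le_trans (hIB1 (jmap N aij i x)).2 (by rw [mul_assoc])
  have hΨ2int : ∀ i : Fin N, Integrable
      (fun x => f i (x i) * HOC.Inner N γt f i1 Gh (deriv g) (jmap N aij i x)) m := by
    intro i
    refine Integrable.mono' (integrable_const (F * (CN / c0 * cg1 * (D / c0)))) ?_ ?_
    · exact (Measurable.mul (((hfc i).comp (continuous_apply i)).measurable)
        (hmeas2.comp (hjmapc i).measurable)).aestronglyMeasurable
    · refine Filter.Eventually.of_forall fun x => ?_
      rw [Real.norm_eq_abs, abs_mul]
      refine mul_le_mul (hfF0 _ _) ?_ (abs_nonneg _) hF.le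
      exact (hIB2 (jmap N aij i x)).2
  -- step 2: each difference equals -∫ ψ_i
  have hstep2 : ∀ i : Fin N,
      (∫ x, f i (x i) * HOC.Inner N γt f i1 H (deriv (deriv g)) (jmap N aij i x) ∂m)
        - (∫ x, f i (x i) * HOC.Inner N γt f i1 Gh (deriv g) (jmap N aij i x) ∂m)
      = -∫ x, ψ i x ∂m := by
    intro i
    rw [← integral_sub (hΨ1int i) (hΨ2int i), ← integral_neg]
    refine integral_congr_ae (Filter.Eventually.of_forall fun x => ?_)
    have hk := key (jmap N aij i x)
    rw [hψdef]
    simp only []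
    linear_combination f i (x i) * hk
  -- ψ at i1 vanishes
  have hψi1 : ∀ x, ψ i1 x = 0 := by
    intro x
    have hj : jmap N aij i1 x i1 = 0 := by simp [jmap]
    have hg'0 : deriv g 0 = 0 := by
      obtain ⟨δ, hδpos, hδ0⟩ := hδ
      have hev : g =ᶠ[nhds 0] (fun _ => 0) := by
        refine Filter.eventually_of_mem (Metric.ball_mem_nhds 0 hδpos) fun v hv => ?_
        exact hδ0 v (by simpa [Real.dist_eq] using hv)
      rw [hev.deriv_eq, deriv_const']
    have hφ0 : φ 0 = 0 := by
      rw [hφdef]; simp only []; rw [hg'0, zero_div]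
    rw [hψdef]
    simp only []
    rw [hj, hφ0, mul_zero, mul_zero]
  -- hrep for ψ_i, i ≠ i1
  have hrep_i : ∀ i : Fin N, i ≠ i1 →
      piH N γt f aij i1 m
        (fun x => f i (x i) * H (jmap N aij i x) /
          (btilde (x i1 + aij i i1 (x i1)) * deriv (fun w => w + aij i i1 w) (x i1)))
        (deriv (fun v => g (v + aij i i1 v)))
      = ∫ x, ψ i x ∂m := by
    intro i hne
    have hii1 : i1 ≠ i := Ne.symm hne
    -- pointwise identity
    have pw : ∀ z : Fin N → ℝ,
        (f i (z i) * H (jmap N aij i z) /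
          (btilde (z i1 + aij i i1 (z i1)) * deriv (fun w => w + aij i i1 w) (z i1)))
          * deriv (fun v => g (v + aij i i1 v)) (z i1)
        = ψ i z := by
      intro z
      have hΔd : HasDerivAt (fun w => w + aij i i1 w) (1 + deriv (aij i i1) (z i1)) (z i1) :=
        (hasDerivAt_id _).add (((haC i i1 hne).differentiable (by simp) _).hasDerivAt)
      have hd_ne : deriv (fun w => w + aij i i1 w) (z i1) ≠ 0 := by
        have := haInv i i1 hne (z i1)
        intro h0
        rw [h0] at this
        simp at this
        linarith
      have hchain : deriv (fun v => g (v + aij i i1 v)) (z i1)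
          = deriv g (z i1 + aij i i1 (z i1)) * deriv (fun w => w + aij i i1 w) (z i1) := by
        rw [hΔd.deriv]
        exact (HasDerivAt.comp (z i1) ((hgd _).hasDerivAt) hΔd).deriv
      have hjm : jmap N aij i z i1 = z i1 + aij i i1 (z i1) := by
        simp [jmap, if_neg hii1]
      rw [hchain, hψdef]
      simp only []
      rw [hjm, hφdef]
      simp only []
      by_cases hb : btilde (z i1 + aij i i1 (z i1)) = 0
      · rw [hb]
        simp
      · field_simp
    rw [hrep (ψ i) (hψm i) ⟨F * (cH * cφ), hψb i⟩]
    rw [piH]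
    refine Finset.sum_congr rfl fun j _ => ?_
    refine integral_congr_ae (Filter.Eventually.of_forall fun x => ?_)
    simp only []
    congr 1
    refine setIntegral_congr_fun measurableSet_Ioi fun t _ => ?_
    have hpw := pw (flowN N γt t (jmap N aij j x))
    simp only [flowN] at hpw ⊢
    linear_combination (surv N γt f (jmap N aij j x) t) * hpw
  -- final assembly
  have e1 : piH N γt f aij i1 m H (deriv (deriv g))
      = ∑ i, ∫ x, f i (x i) * HOC.Inner N γt f i1 H (deriv (deriv g)) (jmap N aij i x) ∂m :=
    hpiH H (deriv (deriv g))
  have e2 : piH N γt f aij i1 m Gh (deriv g)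
      = ∑ i, ∫ x, f i (x i) * HOC.Inner N γt f i1 Gh (deriv g) (jmap N aij i x) ∂m :=
    hpiH Gh (deriv g)
  have hsum : piH N γt f aij i1 m H (deriv (deriv g)) - piH N γt f aij i1 m Gh (deriv g)
      = -∑ i, ∫ x, ψ i x ∂m := by
    rw [e1, e2, ← Finset.sum_sub_distrib, ← Finset.sum_neg_distrib]
    exact Finset.sum_congr rfl fun i _ => hstep2 i
  have hsplit : ∑ i, ∫ x, ψ i x ∂m
      = (∫ x, ψ i1 x ∂m) + ∑ i ∈ Finset.univ.erase i1, ∫ x, ψ i x ∂m :=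
    (Finset.add_sum_erase _ _ (Finset.mem_univ i1)).symm
  have hzero : (∫ x, ψ i1 x ∂m) = 0 := by
    rw [show (fun x => ψ i1 x) = fun _ => (0:ℝ) from funext hψi1]
    exact integral_zero _ _
  have hsum_erase : ∑ i ∈ Finset.univ.erase i1,
      piH N γt f aij i1 m
        (fun x => f i (x i) * H (jmap N aij i x) /
          (btilde (x i1 + aij i i1 (x i1)) * deriv (fun w => w + aij i i1 w) (x i1)))
        (deriv (fun v => g (v + aij i i1 v)))
      = ∑ i ∈ Finset.univ.erase i1, ∫ x, ψ i x ∂m := by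
    refine Finset.sum_congr rfl fun i hi => ?_
    exact hrep_i i (Finset.ne_of_mem_erase hi)
  have hgoal := hsum
  rw [hsplit, hzero, zero_add] at hgoal
  rw [hsum_erase]
  linarith [hgoal]
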